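/- For a rate function r in Λ₀ with primitive r⁰(t) = ∫₀ᵗ r(s) ds, the ratio r(t)/r⁰(t) tends to 0 as t → ∞, and for every a > 0, sup_{t ≥ a} r(t)/r⁰(t) < ∞. -/

import Mathlib

open MeasureTheory

/-- For `r ∈ Λ₀` with primitive `r⁰(t) = ∫₀ᵗ r(s) ds`, the ratio `r(t)/r⁰(t)`
tends to `0` as `t → ∞`, and for every `a > 0`, `sup_{t ≥ a} r(t)/r⁰(t) < ∞`. -/
theorem stmt_2 (r : ℝ → ℝ)
    (hmeas : Measurable r)
    (hge : ∀ t, 0 ≤ t → 1 ≤ r t)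
    (hbdd : ∀ T, 0 < T → ∃ C, ∀ t ∈ Set.Icc (0:ℝ) T, r t ≤ C)
    (hmono : MonotoneOn r (Set.Ici 0))
    (hanti : AntitoneOn (fun t => Real.log (r t) / t) (Set.Ioi 0))
    (hlim : Filter.Tendsto (fun t => Real.log (r t) / t) Filter.atTop (nhds 0)) :
    Filter.Tendsto (fun t => r t / ∫ s in (0:ℝ)..t, r s) Filter.atTop (nhds 0) ∧
      ∀ a, 0 < a → ∃ C, ∀ t, a ≤ t → r t / (∫ s in (0:ℝ)..t, r s) ≤ C := by
  -- integrability on [0, t]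
  have hint : ∀ t : ℝ, 0 ≤ t → IntervalIntegrable r volume 0 t := by
    intro t ht
    rcases eq_or_lt_of_le ht with h | h
    · simp [← h]
    · obtain ⟨C, hC⟩ := hbdd t h
      rw [intervalIntegrable_iff_integrableOn_Ioc_of_le ht]
      refine MeasureTheory.Integrable.mono' (g := fun _ => C)
        (integrableOn_const (by simp) (by simp))
        (hmeas.aestronglyMeasurable.restrict) ?_
      filter_upwards [MeasureTheory.ae_restrict_mem measurableSet_Ioc] with x hx
      rw [Real.norm_eq_abs, abs_of_nonneg (le_trans zero_le_one (hge x hx.1.le))]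
      exact hC x ⟨hx.1.le, hx.2⟩
  -- lower bound 1 : t ≤ ∫₀ᵗ r
  have hlow1 : ∀ t : ℝ, 0 ≤ t → t ≤ ∫ s in (0:ℝ)..t, r s := by
    intro t ht
    have := intervalIntegral.integral_mono_on (f := fun _ => (1:ℝ)) (g := r) ht
      (intervalIntegrable_const) (hint t ht) (fun x hx => hge x hx.1)
    simpa using this
  -- lower bound 2 : (t - u) * r u ≤ ∫₀ᵗ r for 0 ≤ u ≤ t
  have hlow2 : ∀ u t : ℝ, 0 ≤ u → u ≤ t → (t - u) * r u ≤ ∫ s in (0:ℝ)..t, r s := by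
    intro u t hu hut
    have ht : (0:ℝ) ≤ t := le_trans hu hut
    have hiu : IntervalIntegrable r volume 0 u := hint u hu
    have hiut : IntervalIntegrable r volume u t :=
      (hint t ht).mono_set (by
        rw [Set.uIcc_of_le hut, Set.uIcc_of_le ht]
        exact Set.Icc_subset_Icc hu le_rfl)
    have hsplit : (∫ s in (0:ℝ)..u, r s) + (∫ s in u..t, r s) = ∫ s in (0:ℝ)..t, r s :=
      intervalIntegral.integral_add_adjacent_intervals hiu hiut
    have h1 : (0:ℝ) ≤ ∫ s in (0:ℝ)..u, r s := le_trans hu (hlow1 u hu)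
    have h2 : (t - u) * r u ≤ ∫ s in u..t, r s := by
      have := intervalIntegral.integral_mono_on (f := fun _ => r u) (g := r) hut
        (intervalIntegrable_const) hiut
        (fun x hx => hmono hu (le_trans hu hx.1) hx.1)
      simpa [smul_eq_mul] using this
    linarith
  have hpos : ∀ t : ℝ, 0 < t → 0 < ∫ s in (0:ℝ)..t, r s :=
    fun t ht => lt_of_lt_of_le ht (hlow1 t ht.le)
  -- key pointwise bound for t ≥ 1
  have key : ∀ t : ℝ, 1 ≤ t →
      r t / ∫ s in (0:ℝ)..t, r s ≤
        Real.exp 1 / t + Real.exp 1 * (Real.log (r t) / t) := by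
    intro t ht
    have ht0 : (0:ℝ) < t := lt_of_lt_of_le one_pos ht
    have hrt1 : 1 ≤ r t := hge t ht0.le
    have hrt0 : 0 < r t := lt_of_lt_of_le one_pos hrt1
    have hL0 : 0 ≤ Real.log (r t) := Real.log_nonneg hrt1
    have hIpos := hpos t ht0
    set L := Real.log (r t) with hLdef
    rcases le_or_gt L 1 with hL | hL
    · -- r t ≤ e, so ratio ≤ e / t
      have h1 : r t ≤ Real.exp 1 := by
        rw [← Real.exp_log hrt0]; exact Real.exp_le_exp.2 hL
      have h2 : r t / (∫ s in (0:ℝ)..t, r s) ≤ Real.exp 1 / t :=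
        div_le_div₀ (Real.exp_nonneg 1) h1 ht0 (hlow1 t ht0.le)
      have h3 : 0 ≤ Real.exp 1 * (L / t) :=
        mul_nonneg (Real.exp_nonneg 1) (div_nonneg hL0 ht0.le)
      linarith
    · -- take u = t - t/L
      have hLpos : (0:ℝ) < L := lt_trans one_pos hL
      set u := t - t / L with hudef
      have hdpos : 0 < t / L := div_pos ht0 hLpos
      have hdlt : t / L < t := by
        rw [div_lt_iff₀ hLpos]
        nlinarith
      have hu0 : 0 < u := by simp [hudef]; linarith
      have hut : u ≤ t := by simp [hudef]; linarith [hdpos]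
      have hru1 : 1 ≤ r u := hge u hu0.le
      have hru0 : 0 < r u := lt_of_lt_of_le one_pos hru1
      -- from antitonicity : log (r u) ≥ L - 1
      have hant := hanti (Set.mem_Ioi.2 hu0) (Set.mem_Ioi.2 ht0) hut
      -- hant : L / t ≤ log (r u) / u
      have hlogu : L - 1 ≤ Real.log (r u) := by
        have h1 : u * (L / t) ≤ u * (Real.log (r u) / u) :=
          mul_le_mul_of_nonneg_left hant hu0.le
        rw [mul_div_cancel₀ _ hu0.ne'] at h1
        have h2 : u * (L / t) = L - 1 := by
          field_simp [hudef]
          rw [hudef, sub_mul, div_mul_cancel₀ _ hLpos.ne']; ring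
        linarith
      have hru : Real.exp (L - 1) ≤ r u := by
        rw [← Real.exp_log hru0]
        exact Real.exp_le_exp.2 hlogu
      -- lower bound on the integral
      have hI : (t / L) * Real.exp (L - 1) ≤ ∫ s in (0:ℝ)..t, r s := by
        have := hlow2 u t hu0.le hut
        have htu : t - u = t / L := by simp [hudef]
        rw [htu] at this
        calc (t / L) * Real.exp (L - 1) ≤ (t / L) * r u :=
              mul_le_mul_of_nonneg_left hru hdpos.le
          _ ≤ _ := this
      have hIb : 0 < (t / L) * Real.exp (L - 1) :=
        mul_pos hdpos (Real.exp_pos _)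
      have hratio : r t / (∫ s in (0:ℝ)..t, r s) ≤ r t / ((t / L) * Real.exp (L - 1)) := by
        gcongr
      have heq : r t / ((t / L) * Real.exp (L - 1)) = Real.exp 1 * (L / t) := by
        have hexp : Real.exp (L - 1) = r t / Real.exp 1 := by
          rw [Real.exp_sub, Real.exp_log hrt0]
        rw [hexp]
        field_simp
      have h3 : 0 ≤ Real.exp 1 / t := div_nonneg (Real.exp_nonneg 1) ht0.le
      rw [heq] at hratio
      linarith
  -- the limit
  have part1 : Filter.Tendsto (fun t => r t / ∫ s in (0:ℝ)..t, r s)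
      Filter.atTop (nhds 0) := by
    have hg : Filter.Tendsto
        (fun t => Real.exp 1 / t + Real.exp 1 * (Real.log (r t) / t))
        Filter.atTop (nhds 0) := by
      have h1 : Filter.Tendsto (fun t : ℝ => Real.exp 1 / t) Filter.atTop (nhds 0) :=
        Filter.Tendsto.div_atTop tendsto_const_nhds Filter.tendsto_id
      have h2 := hlim.const_mul (Real.exp 1)
      simpa using h1.add h2
    refine squeeze_zero' ?_ ?_ hg
    · filter_upwards [Filter.eventually_ge_atTop (1:ℝ)] with t ht
      exact div_nonneg (le_trans zero_le_one (hge t (by linarith)))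
        (hpos t (by linarith)).le
    · filter_upwards [Filter.eventually_ge_atTop (1:ℝ)] with t ht
      exact key t ht
  refine ⟨part1, ?_⟩
  -- boundedness on [a, ∞)
  intro a ha
  obtain ⟨T, hT⟩ := Filter.eventually_atTop.1
    (part1.eventually (eventually_le_nhds one_pos))
  set T' := max T (max a 1) with hT'def
  have hT'pos : 0 < T' := lt_of_lt_of_le one_pos (le_max_of_le_right (le_max_right _ _))
  obtain ⟨C, hC⟩ := hbdd T' hT'pos
  have hC0 : 0 ≤ C := le_trans zero_le_one
    (le_trans (hge 0 le_rfl) (hC 0 ⟨le_rfl, hT'pos.le⟩))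
  refine ⟨max 1 (C / a), fun t hat => ?_⟩
  have ht0 : 0 < t := lt_of_lt_of_le ha hat
  rcases le_or_gt T t with h | h
  · exact le_trans (hT t h) (le_max_left _ _)
  · have htT' : t ≤ T' := le_trans h.le (le_max_left _ _)
    have h1 : r t ≤ C := hC t ⟨ht0.le, htT'⟩
    have h2 : a ≤ ∫ s in (0:ℝ)..t, r s := le_trans hat (hlow1 t ht0.le)
    exact le_trans (div_le_div₀ hC0 h1 ha h2) (le_max_right _ _)
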